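/- arXiv:2212.12971 — 2 statements merged into one kernel-verified Lean document; each statement's English description precedes it below -/
import Mathlib

section
/- Let n, i, e be positive integers. If n^i · i divides e, then n^i divides the binomial coefficient C(e, i). -/
/-- If `n^i · i` divides `e`, then `n^i` divides the binomial coefficient `C(e, i)`. -/
theorem pow_dvd_choose_of_pow_mul_dvd (n i e : ℕ) (hn : 0 < n) (hi : 0 < i) (he : 0 < e)
    (h : n ^ i * i ∣ e) : n ^ i ∣ e.choose i := by
  obtain ⟨e', rfl⟩ := Nat.exists_eq_succ_of_ne_zero he.ne'
  obtain ⟨i', rfl⟩ := Nat.exists_eq_succ_of_ne_zero hi.ne'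
  have key : (e' + 1) * e'.choose i' = (e' + 1).choose (i' + 1) * (i' + 1) :=
    Nat.add_one_mul_choose_eq e' i'
  have h2 : n ^ (i' + 1) * (i' + 1) ∣ (e' + 1).choose (i' + 1) * (i' + 1) := by
    rw [← key]
    exact h.trans (Dvd.intro _ rfl)
  exact (Nat.mul_dvd_mul_iff_right (Nat.succ_pos i')).mp h2
end

section
/- Let Λ be the exterior algebra over ℚ on generators x₁, …, x_g, y₁, …, y_g, with g ≥ 2 and 1 ≤ t ≤ g-1. Let b = Σ_{i=1}^{t} x_i ∧ y_{i+1}, let ω = x₁ ∧ y₂ ∧ x₂ ∧ y₃ ∧ ⋯ ∧ x_t ∧ y_{t+1}, and let A ⊆ Λ be the ℚ-subalgebra generated by the elements x_i ∧ y_i for 1 ≤ i ≤ g. Then for every 1 ≤ j ≤ t and every element c ∈ A of degree 2j, the coefficient of ω (in the standard monomial basis of Λ in the generators x_i, y_i) in the product b^{t-j} ∧ c is zero. -/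
section Aux

variable {A : Type*} [Ring A] [Algebra ℚ A]

/-- Permuting a list of anticommuting generators changes the product by a scalar. -/
lemma perm_exists_smul (N : ℕ) (gen : ℕ → A)
    (hanti : ∀ a b, a < N → b < N → gen a * gen b = - (gen b * gen a)) :
    ∀ {l l' : List ℕ}, l.Perm l' → (∀ k ∈ l, k < N) →
      ∃ ε : ℚ, (l.map gen).prod = ε • (l'.map gen).prod := by
  intro l l' h
  induction h with
  | nil => exact fun _ => ⟨1, by simp⟩
  | cons x h ih =>
      intro hm
      obtain ⟨ε, hε⟩ := ih (fun k hk => hm k (List.mem_cons_of_mem _ hk))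
      exact ⟨ε, by simp [hε, mul_smul_comm]⟩
  | swap x y L =>
      intro hm
      refine ⟨-1, ?_⟩
      have hx : x < N := hm x (by simp)
      have hy : y < N := hm y (by simp)
      simp only [List.map_cons, List.prod_cons]
      rw [← mul_assoc, ← mul_assoc, hanti y x hy hx]
      simp
  | trans h1 h2 ih1 ih2 =>
      intro hm
      obtain ⟨ε1, h1'⟩ := ih1 hm
      obtain ⟨ε2, h2'⟩ := ih2 (fun k hk => hm k (h1.mem_iff.mpr hk))
      exact ⟨ε1 * ε2, by rw [h1', h2', smul_smul]⟩

lemma exists_dup_perm : ∀ {l : List ℕ}, ¬ l.Nodup → ∃ a L, l.Perm (a :: a :: L) := by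
  intro l
  induction l with
  | nil => intro h; exact absurd List.nodup_nil h
  | cons x xs ih =>
      intro h
      by_cases hx : x ∈ xs
      · exact ⟨x, xs.erase x, (List.perm_cons_erase hx).cons x⟩
      · have : ¬ xs.Nodup := fun hn => h (List.nodup_cons.mpr ⟨hx, hn⟩)
        obtain ⟨a, L, hp⟩ := ih this
        refine ⟨a, x :: L, (hp.cons x).trans ?_⟩
        exact (List.Perm.swap a x (a :: L)).trans ((List.Perm.swap a x L).cons a)

lemma list_flatMap_perm (c : ℕ) (F : List ℕ) :
    (F.flatMap (fun i => [i, c + i])).Perm (F ++ F.map (fun i => c + i)) := by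
  induction F with
  | nil => simp
  | cons a F ih =>
      simp only [List.flatMap_cons, List.map_cons, List.cons_append]
      refine ((ih.cons (c + a)).cons a).trans ?_
      exact (List.perm_middle.symm).cons a

lemma prod_flatMap_pair (gen : ℕ → A) (c : ℕ) :
    ∀ T : List ℕ, (((T.flatMap (fun i => [i, c + i])).map gen).prod)
      = (T.map (fun i => gen i * gen (c + i))).prod := by
  intro T
  induction T with
  | nil => simp
  | cons a T ih => simp [ih, mul_assoc]

lemma list_sum_map_add (c : ℕ) (T : List ℕ) :
    (T.map (fun s => c + s)).sum = T.length * c + T.sum := by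
  induction T with
  | nil => simp
  | cons a T ih => simp [ih]; ring

/-- The key combinatorial fact: a product of `b`-pairs `(i, g+1+i)` and diagonal
pairs `(s, g+s)` (with at least one diagonal pair) is never a permutation of the
index list of `ω`. -/
lemma not_perm_omega (g t : ℕ) (hg : 2 ≤ g) (ht : t ≤ g - 1)
    (F : List ℕ) (hF : ∀ i ∈ F, i < t) (T : List ℕ) (hT : ∀ s ∈ T, s < g)
    (hTlen : 1 ≤ T.length) :
    ¬ (F.flatMap (fun i => [i, g + 1 + i]) ++ T.flatMap (fun i => [i, g + i])).Perm
      (List.range t ++ (List.range t).map (fun i => g + 1 + i)) := by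
  intro h
  have htg : t < g := by omega
  have H : ((F ++ F.map (fun i => g + 1 + i)) ++ (T ++ T.map (fun i => g + i))).Perm
      (List.range t ++ (List.range t).map (fun i => g + 1 + i)) :=
    (((list_flatMap_perm (g + 1) F).append (list_flatMap_perm g T)).symm).trans h
  -- filter with (· < g)
  have hlow : (F ++ T).Perm (List.range t) := by
    have := H.filter (fun k => decide (k < g))
    have e1 : (F ++ F.map (fun i => g + 1 + i)).filter (fun k => decide (k < g)) = F := by
      rw [List.filter_append, List.filter_eq_self.mpr, List.filter_eq_nil_iff.mpr, List.append_nil]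
      · intro a ha
        simp only [List.mem_map] at ha
        obtain ⟨i, _, rfl⟩ := ha
        simp only [decide_eq_true_eq]; omega
      · intro a ha; have := hF a ha; simp only [decide_eq_true_eq]; omega
    have e2 : (T ++ T.map (fun i => g + i)).filter (fun k => decide (k < g)) = T := by
      rw [List.filter_append, List.filter_eq_self.mpr, List.filter_eq_nil_iff.mpr, List.append_nil]
      · intro a ha
        simp only [List.mem_map] at ha
        obtain ⟨i, _, rfl⟩ := ha
        simp only [decide_eq_true_eq]; omega
      · intro a ha; have := hT a ha; simp only [decide_eq_true_eq]; omega
    have e3 : ((List.range t) ++ (List.range t).map (fun i => g + 1 + i)).filter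
        (fun k => decide (k < g)) = List.range t := by
      rw [List.filter_append, List.filter_eq_self.mpr, List.filter_eq_nil_iff.mpr, List.append_nil]
      · intro a ha
        simp only [List.mem_map] at ha
        obtain ⟨i, _, rfl⟩ := ha
        simp only [decide_eq_true_eq]; omega
      · intro a ha; simp only [List.mem_range] at ha; simp only [decide_eq_true_eq]; omega
    rwa [List.filter_append, e1, e2, e3] at this
  -- filter with ¬(· < g)
  have hhigh : (F.map (fun i => g + 1 + i) ++ T.map (fun i => g + i)).Perm
      ((List.range t).map (fun i => g + 1 + i)) := by
    have := H.filter (fun k => decide (g ≤ k))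
    have e1 : (F ++ F.map (fun i => g + 1 + i)).filter (fun k => decide (g ≤ k))
        = F.map (fun i => g + 1 + i) := by
      rw [List.filter_append, List.filter_eq_nil_iff.mpr, List.filter_eq_self.mpr,
        List.nil_append]
      · intro a ha
        simp only [List.mem_map] at ha
        obtain ⟨i, _, rfl⟩ := ha
        simp only [decide_eq_true_eq]; omega
      · intro a ha; have := hF a ha; simp only [decide_eq_true_eq]; omega
    have e2 : (T ++ T.map (fun i => g + i)).filter (fun k => decide (g ≤ k))
        = T.map (fun i => g + i) := by
      rw [List.filter_append, List.filter_eq_nil_iff.mpr, List.filter_eq_self.mpr,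
        List.nil_append]
      · intro a ha
        simp only [List.mem_map] at ha
        obtain ⟨i, _, rfl⟩ := ha
        simp only [decide_eq_true_eq]; omega
      · intro a ha; have := hT a ha; simp only [decide_eq_true_eq]; omega
    have e3 : ((List.range t) ++ (List.range t).map (fun i => g + 1 + i)).filter
        (fun k => decide (g ≤ k)) = (List.range t).map (fun i => g + 1 + i) := by
      rw [List.filter_append, List.filter_eq_nil_iff.mpr, List.filter_eq_self.mpr,
        List.nil_append]
      · intro a ha
        simp only [List.mem_map] at ha
        obtain ⟨i, _, rfl⟩ := ha
        simp only [decide_eq_true_eq]; omega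
      · intro a ha; simp only [List.mem_range] at ha; simp only [decide_eq_true_eq]; omega
    rwa [List.filter_append, e1, e2, e3] at this
  -- combine
  have h3 : ((List.range t).map (fun i => g + 1 + i)).Perm
      (F.map (fun i => g + 1 + i) ++ T.map (fun i => g + 1 + i)) := by
    have := (hlow.symm.map (fun i => g + 1 + i))
    rwa [List.map_append] at this
  have h4 : (T.map (fun i => g + i)).Perm (T.map (fun i => g + 1 + i)) :=
    (List.perm_append_left_iff _).mp (hhigh.trans h3)
  have h5 := h4.sum_eq
  rw [list_sum_map_add, list_sum_map_add, Nat.mul_add, Nat.mul_one] at h5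
  omega

end Aux

set_option maxHeartbeats 2000000

/-- In the exterior algebra over `ℚ` on generators `x₁,…,x_g, y₁,…,y_g`
(here `gen k` for `k < g` is `x_{k+1}` and `gen (g+k)` is `y_{k+1}`), let
`b = Σ_{i=1}^t x_i ∧ y_{i+1}` and let `ω = x₁ ∧ y₂ ∧ x₂ ∧ y₃ ∧ ⋯ ∧ x_t ∧ y_{t+1}`,
whose (sorted) standard-monomial index is the list
`[0,…,t-1] ++ [g+1,…,g+t]`.  Let `c` be an element of degree `2j` of the subalgebra
generated by the `x_i ∧ y_i`, i.e. an element of the span of the `j`-fold products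
`∏_{i ∈ S} x_i ∧ y_i`.  Then the coefficient of `ω` in `b^{t-j} ∧ c` is zero: every
linear functional `φ` vanishing on all standard monomials other than `ω` vanishes
on `b^{t-j} ∧ c`. -/
theorem exterior_omega_coeff_zero (g t j : ℕ) (hg : 2 ≤ g)
    (ht1 : 1 ≤ t) (ht : t ≤ g - 1) (hj1 : 1 ≤ j) (hjt : j ≤ t)
    (gen : ℕ → ExteriorAlgebra ℚ (Fin (2 * g) → ℚ))
    (hgen : ∀ k (h : k < 2 * g),
      gen k = ExteriorAlgebra.ι ℚ (Pi.single (⟨k, h⟩ : Fin (2 * g)) (1 : ℚ)))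
    (c : ExteriorAlgebra ℚ (Fin (2 * g) → ℚ))
    (hc : c ∈ Submodule.span ℚ
      {m : ExteriorAlgebra ℚ (Fin (2 * g) → ℚ) | ∃ S : Finset ℕ,
        S.card = j ∧ (∀ i ∈ S, i < g) ∧
        m = ((S.sort (· ≤ ·)).map (fun i => gen i * gen (g + i))).prod})
    (φ : ExteriorAlgebra ℚ (Fin (2 * g) → ℚ) →ₗ[ℚ] ℚ)
    (hφ : ∀ l : List ℕ, l.Pairwise (· < ·) → (∀ k ∈ l, k < 2 * g) →
      l ≠ List.range t ++ (List.range t).map (fun i => g + 1 + i) →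
      φ (l.map gen).prod = 0) :
    φ ((∑ i ∈ Finset.range t, gen i * gen (g + 1 + i)) ^ (t - j) * c) = 0 := by
  -- basic algebraic facts about the generators
  have hsq : ∀ a, a < 2 * g → gen a * gen a = 0 := by
    intro a ha
    rw [hgen a ha]
    exact ExteriorAlgebra.ι_sq_zero _
  have hanti : ∀ a b, a < 2 * g → b < 2 * g → gen a * gen b = - (gen b * gen a) := by
    intro a b ha hb
    rw [hgen a ha, hgen b hb]
    exact eq_neg_of_add_eq_zero_left (ExteriorAlgebra.ι_add_mul_swap _ _)
  set L₀ : List ℕ := List.range t ++ (List.range t).map (fun i => g + 1 + i) with hL₀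
  -- vanishing on products over lists not permutation-equivalent to L₀
  have key : ∀ l : List ℕ, (∀ k ∈ l, k < 2 * g) → ¬ l.Perm L₀ →
      φ (l.map gen).prod = 0 := by
    intro l hl hnp
    by_cases hnd : l.Nodup
    · set l' := l.insertionSort (· ≤ ·) with hl'
      have hperm : l.Perm l' := (List.perm_insertionSort (· ≤ ·) l).symm
      have hsorted : l'.Pairwise (· ≤ ·) := List.pairwise_insertionSort (· ≤ ·) l
      have hnd' : l'.Nodup := hperm.nodup_iff.mp hnd
      have hsl : l'.Pairwise (· < ·) :=
        (List.pairwise_and_iff.mpr ⟨hsorted, hnd'⟩).imp (fun h => lt_of_le_of_ne h.1 h.2)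
      obtain ⟨ε, hε⟩ := perm_exists_smul (2 * g) gen hanti hperm hl
      rw [hε, map_smul]
      have hne : l' ≠ L₀ := by
        intro hEq
        exact hnp (hEq ▸ hperm)
      rw [hφ l' hsl (fun k hk => hl k (hperm.mem_iff.mpr hk)) hne, smul_zero]
    · obtain ⟨a, L, hp⟩ := exists_dup_perm hnd
      obtain ⟨ε, hε⟩ := perm_exists_smul (2 * g) gen hanti hp hl
      have ha : a < 2 * g := hl a (hp.mem_iff.mpr (by simp))
      rw [hε]
      simp only [List.map_cons, List.prod_cons, ← mul_assoc, hsq a ha, zero_mul, smul_zero,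
        map_zero]
  set b : ExteriorAlgebra ℚ (Fin (2 * g) → ℚ) :=
    ∑ i ∈ Finset.range t, gen i * gen (g + 1 + i) with hb
  -- reduce to generators of the span
  have main : ∀ S : Finset ℕ, S.card = j → (∀ i ∈ S, i < g) →
      φ (b ^ (t - j) * ((S.sort (· ≤ ·)).map (fun i => gen i * gen (g + i))).prod) = 0 := by
    intro S hcard hSg
    set T : List ℕ := S.sort (· ≤ ·) with hT
    have hTlen : T.length = j := by rw [hT, Finset.length_sort]; exact hcard
    have hTg : ∀ s ∈ T, s < g := fun s hs => hSg s (by rwa [hT, Finset.mem_sort] at hs)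
    have hmS : (T.map (fun i => gen i * gen (g + i))).prod
        = ((T.flatMap (fun i => [i, g + i])).map gen).prod :=
      (prod_flatMap_pair gen g T).symm
    -- generalized induction over powers of b
    have ind : ∀ n (F : List ℕ), (∀ i ∈ F, i < t) →
        φ (((F.flatMap (fun i => [i, g + 1 + i])).map gen).prod
          * (b ^ n * ((T.flatMap (fun i => [i, g + i])).map gen).prod)) = 0 := by
      intro n
      induction n with
      | zero =>
          intro F hF
          rw [pow_zero, one_mul, ← List.prod_append, ← List.map_append]
          apply key
          · intro k hk
            simp only [List.mem_append, List.mem_flatMap, List.mem_cons,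
              List.not_mem_nil, or_false] at hk
            rcases hk with ⟨i, hi, rfl | rfl⟩ | ⟨i, hi, rfl | rfl⟩
            · have := hF _ hi; omega
            · have := hF i hi; omega
            · have := hTg _ hi; omega
            · have := hTg i hi; omega
          · exact not_perm_omega g t hg ht F hF T hTg (by omega)
      | succ n ih =>
          intro F hF
          rw [pow_succ', ← mul_assoc, ← mul_assoc]
          have expand : (((F.flatMap (fun i => [i, g + 1 + i])).map gen).prod * b)
              = ∑ i ∈ Finset.range t,
                (((F ++ [i]).flatMap (fun i => [i, g + 1 + i])).map gen).prod := by
            rw [hb, Finset.mul_sum]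
            refine Finset.sum_congr rfl (fun i _ => ?_)
            rw [List.flatMap_append, List.map_append, List.prod_append,
              List.flatMap_cons, List.flatMap_nil, List.append_nil,
              List.map_cons, List.map_cons, List.map_nil, List.prod_cons,
              List.prod_cons, List.prod_nil, mul_one]
          rw [expand, Finset.sum_mul, Finset.sum_mul, map_sum]
          refine Finset.sum_eq_zero (fun i hi => ?_)
          rw [mul_assoc]
          exact ih (F ++ [i]) (by
            intro k hk
            simp only [List.mem_append, List.mem_singleton] at hk
            rcases hk with hk | rfl
            · exact hF k hk
            · exact Finset.mem_range.mp hi)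
    have := ind (t - j) []
    simp only [List.flatMap_nil, List.map_nil, List.prod_nil, one_mul] at this
    rw [hmS]
    exact this (by simp)
  -- conclude by linearity
  have : c ∈ LinearMap.ker (φ.comp (LinearMap.mulLeft ℚ (b ^ (t - j)))) := by
    refine Submodule.span_le.mpr ?_ hc
    rintro m ⟨S, hcard, hSg, rfl⟩
    simpa using main S hcard hSg
  simpa using this
end
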